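/- For every real number p ≥ 2 and all vectors ξ, η in ℝ^m, ⟨|ξ|^{p-2}ξ − |η|^{p-2}η, ξ − η⟩ ≥ 2^{-p/2} (|ξ|^2 + |η|^2)^{(p-2)/2} |ξ − η|^2. -/

import Mathlib

open Real

theorem stmt_1 (m : ℕ) (p : ℝ) (hp : 2 ≤ p)
    (ξ η : EuclideanSpace ℝ (Fin m)) :
    (inner ℝ ((‖ξ‖ ^ (p - 2)) • ξ - (‖η‖ ^ (p - 2)) • η) (ξ - η) : ℝ) ≥
      (2 : ℝ) ^ (-p / 2) * (‖ξ‖ ^ 2 + ‖η‖ ^ 2) ^ ((p - 2) / 2) * ‖ξ - η‖ ^ 2 := by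
  have ha0 : (0:ℝ) ≤ ‖ξ‖ := norm_nonneg _
  have hb0 : (0:ℝ) ≤ ‖η‖ := norm_nonneg _
  have hq : 0 ≤ p - 2 := by linarith
  set a := ‖ξ‖ with ha
  set b := ‖η‖ with hb
  set A := a ^ (p - 2) with hA
  set B := b ^ (p - 2) with hB
  have hA0 : 0 ≤ A := Real.rpow_nonneg ha0 _
  have hB0 : 0 ≤ B := Real.rpow_nonneg hb0 _
  have hinner : (inner ℝ (A • ξ - B • η) (ξ - η) : ℝ)
      = A * a ^ 2 + B * b ^ 2 - (A + B) * (inner ℝ ξ η : ℝ) := by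
    simp only [inner_sub_left, inner_sub_right, real_inner_smul_left,
      real_inner_self_eq_norm_sq, real_inner_comm η ξ]
    ring
  have hns : ‖ξ - η‖ ^ 2 = a ^ 2 + b ^ 2 - 2 * (inner ℝ ξ η : ℝ) := by
    rw [norm_sub_sq_real]; ring
  have hmono : 0 ≤ (A - B) * (a ^ 2 - b ^ 2) := by
    rcases le_total a b with h | h
    · have hAB : A ≤ B := Real.rpow_le_rpow ha0 h hq
      have h2 : a ^ 2 ≤ b ^ 2 := by nlinarith
      nlinarith [mul_nonneg (sub_nonneg.2 hAB) (sub_nonneg.2 h2)]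
    · have hAB : B ≤ A := Real.rpow_le_rpow hb0 h hq
      have h2 : b ^ 2 ≤ a ^ 2 := by nlinarith
      nlinarith [mul_nonneg (sub_nonneg.2 hAB) (sub_nonneg.2 h2)]
  have hcoef : (2:ℝ) ^ (-p/2) * (a ^ 2 + b ^ 2) ^ ((p - 2)/2) ≤ (A + B)/2 := by
    set M := max a b with hM
    have hM0 : 0 ≤ M := le_trans ha0 (le_max_left _ _)
    have h1 : a ^ 2 + b ^ 2 ≤ 2 * M ^ 2 := by
      have h11 : a ≤ M := le_max_left _ _
      have h12 : b ≤ M := le_max_right _ _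
      nlinarith
    have h2 : (a ^ 2 + b ^ 2) ^ ((p - 2)/2) ≤ (2 * M ^ 2) ^ ((p - 2)/2) :=
      Real.rpow_le_rpow (by positivity) h1 (by linarith)
    have h3 : (2 * M ^ 2 : ℝ) ^ ((p - 2)/2) = 2 ^ ((p - 2)/2) * M ^ (p - 2) := by
      rw [Real.mul_rpow (by norm_num) (by positivity)]
      congr 1
      rw [← Real.rpow_natCast M 2, ← Real.rpow_mul hM0]
      norm_num
      rw [show (2:ℝ) * ((p - 2)/2) = p - 2 by ring]
    have h4 : M ^ (p - 2) ≤ A + B := by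
      rcases max_cases a b with ⟨h, _⟩ | ⟨h, _⟩ <;> rw [hM, h]
      · linarith
      · linarith
    have h5 : (2:ℝ) ^ (-p/2) * (2:ℝ) ^ ((p - 2)/2) = 1/2 := by
      rw [← Real.rpow_add (by norm_num)]
      rw [show -p/2 + (p - 2)/2 = -1 by ring]
      rw [Real.rpow_neg_one]
      norm_num
    have h6 : (0:ℝ) < (2:ℝ) ^ (-p/2) := Real.rpow_pos_of_pos (by norm_num) _
    calc (2:ℝ) ^ (-p/2) * (a ^ 2 + b ^ 2) ^ ((p - 2)/2)
        ≤ (2:ℝ) ^ (-p/2) * ((2:ℝ) ^ ((p - 2)/2) * M ^ (p - 2)) := by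
          rw [← h3]; exact mul_le_mul_of_nonneg_left h2 h6.le
      _ = ((2:ℝ) ^ (-p/2) * (2:ℝ) ^ ((p - 2)/2)) * M ^ (p - 2) := by ring
      _ = M ^ (p - 2) / 2 := by rw [h5]; ring
      _ ≤ (A + B)/2 := by linarith
  have hsq : (0:ℝ) ≤ ‖ξ - η‖ ^ 2 := sq_nonneg _
  have hstep : (2:ℝ) ^ (-p/2) * (a ^ 2 + b ^ 2) ^ ((p - 2)/2) * ‖ξ - η‖ ^ 2
      ≤ (A + B)/2 * ‖ξ - η‖ ^ 2 := mul_le_mul_of_nonneg_right hcoef hsq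
  rw [ge_iff_le, hinner]
  nlinarith [hstep, hns, hmono]
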